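/- For every positive integer n and every positive divisor d of n, the number of nonempty subsets A of {1,2,...,n} such that gcd(gcd(A), n) = d equals Φ(n/d). -/
import Mathlib


/-- `Phi n` is the number of nonempty subsets `A` of `{1,2,...,n}` such that
`gcd(A)` is relatively prime to `n`. -/
def Phi (n : ℕ) : ℕ :=
  ((Finset.Icc 1 n).powerset.filter
    (fun A => A.Nonempty ∧ Nat.gcd (A.gcd id) n = 1)).card

theorem card_gcd_eq_d (n d : ℕ) (hn : 0 < n) (hd : d ∣ n) (hd0 : 0 < d) :
    ((Finset.Icc 1 n).powerset.filter
      (fun A => A.Nonempty ∧ Nat.gcd (A.gcd id) n = d)).card = Phi (n / d) := by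
  set m := n / d with hm
  have hnm : n = d * m := (Nat.div_mul_cancel hd).symm.trans (by ring)
  unfold Phi
  refine Finset.card_bij' (fun A _ => A.image (· / d)) (fun B _ => B.image (d * ·)) ?hi ?hj ?left ?right
  case hi =>
    intro A hA
    simp only [Finset.mem_filter, Finset.mem_powerset] at hA ⊢
    obtain ⟨hsub, hne, hgcd⟩ := hA
    have hdvd : ∀ a ∈ A, d ∣ a := fun a ha => by
      have h1 : d ∣ A.gcd id := hgcd ▸ Nat.gcd_dvd_left _ _
      exact h1.trans (Finset.gcd_dvd ha)
    refine ⟨?_, hne.image _, ?_⟩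
    · intro b hb
      simp only [Finset.mem_image] at hb
      obtain ⟨a, ha, rfl⟩ := hb
      have ha' := hsub ha
      simp only [Finset.mem_Icc] at ha' ⊢
      constructor
      · exact Nat.one_le_div_iff hd0 |>.mpr (Nat.le_of_dvd (ha'.1) (hdvd a ha))
      · exact Nat.div_le_div_right ha'.2
    · have key : A.gcd id = d * ((A.image (· / d)).gcd id) := by
        rw [Finset.gcd_image]
        have : A.gcd id = A.gcd (fun a => d * (a / d)) :=
          Finset.gcd_congr rfl (fun a ha => (Nat.mul_div_cancel' (hdvd a ha)).symm)
        rw [this, Finset.gcd_mul_left]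
        simp
      have : d * Nat.gcd ((A.image (· / d)).gcd id) m = d := by
        rw [← Nat.gcd_mul_left, ← key, ← hnm, hgcd]
      exact Nat.eq_of_mul_eq_mul_left hd0 (this.trans (mul_one d).symm)
  case hj =>
    intro B hB
    simp only [Finset.mem_filter, Finset.mem_powerset] at hB ⊢
    obtain ⟨hsub, hne, hgcd⟩ := hB
    refine ⟨?_, hne.image _, ?_⟩
    · intro a ha
      simp only [Finset.mem_image] at ha
      obtain ⟨b, hb, rfl⟩ := ha
      have hb' := hsub hb
      simp only [Finset.mem_Icc] at hb' ⊢
      constructor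
      · exact Nat.mul_pos hd0 hb'.1
      · rw [hnm]; exact Nat.mul_le_mul_left d hb'.2
    · have : (B.gcd (id ∘ fun x => d * x)) = d * B.gcd id := by
        rw [show (id ∘ fun x => d * x) = (fun b => d * id b) from rfl, Finset.gcd_mul_left]
        simp
      rw [Finset.gcd_image, this, hnm, Nat.gcd_mul_left, hgcd, mul_one]
  case left =>
    intro A hA
    simp only [Finset.mem_filter, Finset.mem_powerset] at hA
    obtain ⟨hsub, hne, hgcd⟩ := hA
    have hdvd : ∀ a ∈ A, d ∣ a := fun a ha => by
      have h1 : d ∣ A.gcd id := hgcd ▸ Nat.gcd_dvd_left _ _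
      exact h1.trans (Finset.gcd_dvd ha)
    show (A.image (· / d)).image (d * ·) = A
    rw [Finset.image_image]
    nth_rewrite 2 [show A = A.image id from (Finset.image_id).symm]
    apply Finset.image_congr
    intro a ha
    simp [Nat.mul_div_cancel' (hdvd a ha)]
  case right =>
    intro B hB
    show (B.image (d * ·)).image (· / d) = B
    rw [Finset.image_image]
    nth_rewrite 2 [show B = B.image id from (Finset.image_id).symm]
    apply Finset.image_congr
    intro b hb
    simp [Nat.mul_div_cancel_left b hd0]
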